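/- arXiv:2009.03783 — 7 statements merged into one kernel-verified Lean document; each statement's English description precedes it below -/
import Mathlib

section
/- Let N ≥ 1 and Q ≥ 1 be integers and let ε ∈ (0, 1/2]. Let 𝒱 be a finite nonempty family of value functions v : Finset (Fin N) → ℝ whose robust core C₀ = ⋂_{v∈𝒱} C(v) is nonempty. Let 𝒯 be a finite family of maps T : X → X, each nonexpansive with respect to ‖·‖_{2,2}, such that ⋂_{T∈𝒯} fix(T) = C₀^N := {x ∈ X | ∀ i, x_i ∈ C₀}. Let 𝒲 be a finite family of N×N doubly stochastic matrices with strictly positive diagonal entries. Let (T^k)_{k∈ℕ} be a sequence with T^k ∈ 𝒯 such that for every n ∈ ℕ, {T^n, T^{n+1}, …, T^{n+Q}} = 𝒯, and let (W^k)_{k∈ℕ} be a sequence with W^k ∈ 𝒲 such that for every k ∈ ℕ the edge set ⋃_{l=1}^{Q} {(i,j) | W^{k+l}_{ij} > 0} is strongly connected on Fin N. Let (α_k)_{k∈ℕ} satisfy α_k ∈ [ε, 1−ε] for all k. Then for every initial point x⁰ ∈ X, the sequence generated by x^{k+1} = (1−α_k) x^k + α_k T^k(𝑾^k x^k) converges to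 some x̄ ∈ 𝒜 ∩ C₀^N, i.e., a point with all components equal to a common payoff vector lying in the robust core C₀. -/
open scoped BigOperators

noncomputable section

/-- The stacked space `X = Fin N → EuclideanSpace ℝ (Fin N)` with the ℓ²-product norm. -/
abbrev XSp (N : ℕ) := PiLp 2 (fun _ : Fin N => EuclideanSpace ℝ (Fin N))

/-- The core of a TU coalitional game with value function `v`. -/
def core {N : ℕ} (v : Finset (Fin N) → ℝ) : Set (EuclideanSpace ℝ (Fin N)) :=
  {x | ∑ i, x i = v Finset.univ ∧
    ∀ S : Finset (Fin N), S.Nonempty → ∑ i ∈ S, x i ≥ v S}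

/-- A matrix is doubly stochastic: nonnegative entries, rows and columns sum to 1. -/
def DoublyStochastic {N : ℕ} (W : Matrix (Fin N) (Fin N) ℝ) : Prop :=
  (∀ i j, 0 ≤ W i j) ∧ (∀ i, ∑ j, W i j = 1) ∧ (∀ j, ∑ i, W i j = 1)

/-- The averaging map `(𝑾 x)_i = ∑ j, W i j • x j` (Kronecker product `W ⊗ I`). -/
def avgMap {N n : ℕ} (W : Matrix (Fin N) (Fin N) ℝ)
    (x : PiLp 2 fun _ : Fin N => EuclideanSpace ℝ (Fin n)) :
    PiLp 2 fun _ : Fin N => EuclideanSpace ℝ (Fin n) :=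
  WithLp.toLp 2 (fun i => ∑ j, W i j • x j)

/-- An edge set on `Fin N` is strongly connected. -/
def StronglyConnected {N : ℕ} (E : Set (Fin N × Fin N)) : Prop :=
  ∀ i j : Fin N, Relation.ReflTransGen (fun a b => (a, b) ∈ E) i j

/-- A map is nonexpansive (1-Lipschitz). -/
def Nonexpansive {E : Type*} [NormedAddCommGroup E] (T : E → E) : Prop :=
  ∀ x y, ‖T x - T y‖ ≤ ‖x - y‖

/-- A continuous map `M` is a paracontraction if `‖M x - y‖ < ‖x - y‖` whenever
`x` is not a fixed point of `M` and `y` is a fixed point of `M`. -/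
def Paracontraction {E : Type*} [NormedAddCommGroup E] (M : E → E) : Prop :=
  Continuous M ∧ ∀ x y, M x ≠ x → M y = y → ‖M x - y‖ < ‖x - y‖

section AuxLemmas
open scoped RealInnerProductSpace

variable {N n : ℕ}

local notation "Y" => PiLp 2 fun _ : Fin N => EuclideanSpace ℝ (Fin n)

lemma piLp_norm_sq (z : Y) : ‖z‖^2 = ∑ i, ‖z i‖^2 := PiLp.norm_sq_eq_of_L2 _ z

lemma le_of_sq_le_sq' {a b : ℝ} (h : a^2 ≤ b^2) (hb : 0 ≤ b) : a ≤ b := by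
  nlinarith [sq_nonneg (a - b), sq_nonneg (a + b)]

lemma coord_norm_le (z : Y) (i : Fin N) : ‖z i‖ ≤ ‖z‖ := by
  apply le_of_sq_le_sq' _ (norm_nonneg _)
  rw [piLp_norm_sq]
  exact Finset.single_le_sum (f := fun j => ‖z j‖^2) (fun j _ => sq_nonneg _) (Finset.mem_univ i)

lemma avgMap_apply (W : Matrix (Fin N) (Fin N) ℝ) (z : Y) (i : Fin N) :
    avgMap W z i = ∑ j, W i j • z j := rfl

lemma avgMap_sub (W : Matrix (Fin N) (Fin N) ℝ) (u v : Y) :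
    avgMap W u - avgMap W v = avgMap W (u - v) := by
  refine PiLp.ext fun i => ?_
  simp only [PiLp.sub_apply, avgMap_apply, ← Finset.sum_sub_distrib, smul_sub]

lemma avgMap_consensus (W : Matrix (Fin N) (Fin N) ℝ) (hrow : ∀ i, ∑ j, W i j = 1)
    (z : Y) (hz : ∀ i j, z i = z j) : avgMap W z = z := by
  refine PiLp.ext fun i => ?_
  have : ∀ j, z j = z i := fun j => hz j i
  simp only [avgMap_apply]
  calc ∑ j, W i j • z j = ∑ j, W i j • z i := by
        exact Finset.sum_congr rfl fun j _ => by rw [this j]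
    _ = (∑ j, W i j) • z i := by rw [Finset.sum_smul]
    _ = z i := by rw [hrow i, one_smul]

lemma qf (W : Matrix (Fin N) (Fin N) ℝ) (hW : DoublyStochastic W) (z : Y) :
    ‖z‖^2 - ‖avgMap W z‖^2
      = (1/2) * ∑ a, ∑ b, (∑ i, W i a * W i b) * ‖z a - z b‖^2 := by
  obtain ⟨hpos, hrow, hcol⟩ := hW
  set κ : Fin N → Fin N → ℝ := fun a b => ∑ i, W i a * W i b with hκ
  have hκrow : ∀ a, ∑ b, κ a b = 1 := by
    intro a
    calc ∑ b, ∑ i, W i a * W i b = ∑ i, ∑ b, W i a * W i b := Finset.sum_comm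
      _ = ∑ i, W i a * ∑ b, W i b := by simp [Finset.mul_sum]
      _ = ∑ i, W i a := by simp [hrow]
      _ = 1 := hcol a
  have hκcol : ∀ b, ∑ a, κ a b = 1 := by
    intro b
    calc ∑ a, ∑ i, W i a * W i b = ∑ i, ∑ a, W i a * W i b := Finset.sum_comm
      _ = ∑ i, (∑ a, W i a) * W i b := by simp [Finset.sum_mul]
      _ = ∑ i, W i b := by simp [hrow]
      _ = 1 := hcol b
  have hWz : ‖avgMap W z‖^2 = ∑ a, ∑ b, κ a b * ⟪z a, z b⟫ := by
    rw [piLp_norm_sq]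
    have : ∀ i : Fin N, ‖avgMap W z i‖^2 = ∑ a, ∑ b, (W i a * W i b) * ⟪z a, z b⟫ := by
      intro i
      rw [← real_inner_self_eq_norm_sq, avgMap_apply, sum_inner]
      refine Finset.sum_congr rfl fun a _ => ?_
      rw [inner_sum]
      refine Finset.sum_congr rfl fun b _ => ?_
      rw [real_inner_smul_left, real_inner_smul_right]; ring
    rw [Finset.sum_congr rfl fun i _ => this i]
    rw [Finset.sum_comm]
    refine Finset.sum_congr rfl fun a _ => ?_
    rw [Finset.sum_comm]
    refine Finset.sum_congr rfl fun b _ => ?_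
    rw [hκ, Finset.sum_mul]
  have hz2 : ‖z‖^2 = ∑ a, ‖z a‖^2 := piLp_norm_sq z
  have hexp : ∀ a b : Fin N, ‖z a - z b‖^2 = ‖z a‖^2 - 2*⟪z a, z b⟫ + ‖z b‖^2 := by
    intro a b; rw [norm_sub_sq_real]
  have key : ∑ a, ∑ b, κ a b * ‖z a - z b‖^2
      = 2*‖z‖^2 - 2*∑ a, ∑ b, κ a b * ⟪z a, z b⟫ := by
    have e1 : ∑ a, ∑ b, κ a b * ‖z a - z b‖^2
        = ∑ a, ∑ b, (κ a b * ‖z a‖^2 - 2*(κ a b * ⟪z a, z b⟫) + κ a b * ‖z b‖^2) := by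
      refine Finset.sum_congr rfl fun a _ => Finset.sum_congr rfl fun b _ => ?_
      rw [hexp]; ring
    rw [e1]
    have e2 : ∑ a, ∑ b, κ a b * ‖z a‖^2 = ∑ a, ‖z a‖^2 := by
      refine Finset.sum_congr rfl fun a _ => ?_
      rw [← Finset.sum_mul, hκrow, one_mul]
    have e3 : ∑ a, ∑ b, κ a b * ‖z b‖^2 = ∑ b, ‖z b‖^2 := by
      rw [Finset.sum_comm]
      refine Finset.sum_congr rfl fun b _ => ?_
      rw [← Finset.sum_mul, hκcol, one_mul]
    simp only [Finset.sum_add_distrib, Finset.sum_sub_distrib, ← Finset.mul_sum]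
    rw [e2, e3, hz2]
    ring_nf
  rw [hWz]
  linarith [key]

lemma coord_tendsto {ι : Type*} {f : Filter ι} {u : ι → Y} {v : Y}
    (h : Filter.Tendsto u f (nhds v)) (a : Fin N) :
    Filter.Tendsto (fun i => u i a) f (nhds (v a)) := by
  rw [tendsto_iff_norm_sub_tendsto_zero] at h ⊢
  apply squeeze_zero (fun i => norm_nonneg _) _ h
  intro i
  have := coord_norm_le (u i - v) a
  simpa [PiLp.sub_apply] using this

lemma avgMap_norm_le (W : Matrix (Fin N) (Fin N) ℝ) (hW : DoublyStochastic W) (z : Y) :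
    ‖avgMap W z‖ ≤ ‖z‖ := by
  apply le_of_sq_le_sq' _ (norm_nonneg _)
  have h := qf W hW z
  have hnn : (0:ℝ) ≤ ∑ a, ∑ b, (∑ i, W i a * W i b) * ‖z a - z b‖^2 := by
    apply Finset.sum_nonneg; intro a _
    apply Finset.sum_nonneg; intro b _
    apply mul_nonneg _ (sq_nonneg _)
    exact Finset.sum_nonneg fun i _ => mul_nonneg (hW.1 i a) (hW.1 i b)
  nlinarith

lemma km_identity {F : Type*} [NormedAddCommGroup F] [InnerProductSpace ℝ F]
    (a : ℝ) (u s y : F) :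
    ‖(1-a)•u + a•s - y‖^2
      = (1-a)*‖u-y‖^2 + a*‖s-y‖^2 - a*(1-a)*‖u-s‖^2 := by
  have h : (1-a)•u + a•s - y = (u - y) + a•(s - u) := by module
  have h2 : s - y = (u - y) + (s - u) := by abel
  have h3 : u - s = -(s - u) := by abel
  have e1 : ‖a • (s - u)‖^2 = a^2 * ‖s - u‖^2 := by
    rw [norm_smul, mul_pow, Real.norm_eq_abs, sq_abs]
  rw [h, h2, h3, norm_add_sq_real, norm_add_sq_real, real_inner_smul_right, norm_neg, e1]
  ring

end AuxLemmas

set_option maxHeartbeats 2000000 in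
/-- Theorem 1 (Convergence of the distributed payoff allocation). -/
theorem payoff_allocation_convergence
    (N Q : ℕ) (hN : 1 ≤ N) (hQ : 1 ≤ Q)
    (ε : ℝ) (hε : ε ∈ Set.Ioc (0 : ℝ) (1 / 2))
    (𝒱 : Set (Finset (Fin N) → ℝ)) (h𝒱fin : 𝒱.Finite) (h𝒱ne : 𝒱.Nonempty)
    (C₀ : Set (EuclideanSpace ℝ (Fin N))) (hC₀ : C₀ = ⋂ v ∈ 𝒱, core v)
    (hC₀ne : C₀.Nonempty)
    (𝒯 : Set (XSp N → XSp N)) (h𝒯fin : 𝒯.Finite)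
    (h𝒯nonexp : ∀ T ∈ 𝒯, Nonexpansive T)
    (h𝒯fix : (⋂ T ∈ 𝒯, Function.fixedPoints T) = {x : XSp N | ∀ i, x i ∈ C₀})
    (𝒲 : Set (Matrix (Fin N) (Fin N) ℝ)) (h𝒲fin : 𝒲.Finite)
    (h𝒲 : ∀ W ∈ 𝒲, DoublyStochastic W ∧ ∀ i, 0 < W i i)
    (T : ℕ → (XSp N → XSp N)) (hT : ∀ k, T k ∈ 𝒯)
    (hTQ : ∀ n : ℕ, {U | ∃ l ≤ Q, T (n + l) = U} = 𝒯)
    (W : ℕ → Matrix (Fin N) (Fin N) ℝ) (hW : ∀ k, W k ∈ 𝒲)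
    (hWconn : ∀ k : ℕ, StronglyConnected
      {p : Fin N × Fin N | ∃ l, 1 ≤ l ∧ l ≤ Q ∧ 0 < W (k + l) p.1 p.2})
    (α : ℕ → ℝ) (hα : ∀ k, α k ∈ Set.Icc ε (1 - ε))
    (x : ℕ → XSp N) (x0 : XSp N) (hx0 : x 0 = x0)
    (hiter : ∀ k, x (k + 1) = (1 - α k) • x k + α k • T k (avgMap (W k) (x k))) :
    ∃ xb : XSp N, Filter.Tendsto x Filter.atTop (nhds xb) ∧
      (∀ i j, xb i = xb j) ∧ (∀ i, xb i ∈ C₀) := by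
  classical
  obtain ⟨hε0, hε2⟩ := hε
  obtain ⟨c, hc⟩ := hC₀ne
  set y₀ : XSp N := WithLp.toLp 2 (fun _ => c) with hy₀
  have hy₀C : ∀ i, y₀ i ∈ C₀ := fun _ => hc
  have hy₀cons : ∀ i j : Fin N, y₀ i = y₀ j := fun _ _ => rfl
  -- basic facts about α
  have hα0 : ∀ k, ε ≤ α k := fun k => (hα k).1
  have hα1 : ∀ k, α k ≤ 1 - ε := fun k => (hα k).2
  -- fixed points
  have hfixmem : ∀ (y : XSp N), (∀ i, y i ∈ C₀) → ∀ U ∈ 𝒯, U y = y := by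
    intro y hy U hU
    have hmem : y ∈ ⋂ U ∈ 𝒯, Function.fixedPoints U := by
      rw [h𝒯fix]; exact hy
    exact Set.mem_iInter₂.mp hmem U hU
  have hWds : ∀ k, DoublyStochastic (W k) := fun k => (h𝒲 _ (hW k)).1
  have havgy : ∀ (W' : Matrix (Fin N) (Fin N) ℝ), DoublyStochastic W' →
      ∀ (y : XSp N), (∀ i j, y i = y j) → avgMap W' y = y :=
    fun W' hW' y hy => avgMap_consensus W' hW'.2.1 y hy
  -- the nonexpansive composite map value sequence
  set S : ℕ → XSp N := fun k => T k (avgMap (W k) (x k)) with hS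
  set r : ℕ → ℝ := fun k => ‖x k - S k‖ with hr
  set D : ℕ → ℝ := fun k => ‖x k - y₀‖^2 with hD
  set A : ℕ → ℝ := fun k => ‖avgMap (W k) (x k) - y₀‖^2 with hA
  set e : ℕ → ℝ := fun k => D k - A k with he
  -- distance to consensus fixed points is nonincreasing
  have hSyle : ∀ (y : XSp N), (∀ i j, y i = y j) → (∀ i, y i ∈ C₀) →
      ∀ k, ‖S k - y‖ ≤ ‖x k - y‖ := by
    intro y hyc hyC k
    have h1 : T k y = y := hfixmem y hyC (T k) (hT k)
    have h2 : avgMap (W k) y = y := havgy (W k) (hWds k) y hyc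
    calc ‖S k - y‖ = ‖T k (avgMap (W k) (x k)) - T k y‖ := by rw [h1]
      _ ≤ ‖avgMap (W k) (x k) - y‖ := h𝒯nonexp (T k) (hT k) _ _
      _ = ‖avgMap (W k) (x k - y)‖ := by nth_rewrite 1 [← h2]; rw [avgMap_sub]
      _ ≤ ‖x k - y‖ := avgMap_norm_le (W k) (hWds k) _
  have hstep : ∀ (y : XSp N), (∀ i j, y i = y j) → (∀ i, y i ∈ C₀) →
      ∀ k, ‖x (k+1) - y‖ ≤ ‖x k - y‖ := by
    intro y hyc hyC k
    have hx1 : x (k+1) - y = (1 - α k) • (x k - y) + α k • (S k - y) := by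
      rw [hiter k]; module
    have h3 := hSyle y hyc hyC k
    calc ‖x (k+1) - y‖ = ‖(1 - α k) • (x k - y) + α k • (S k - y)‖ := by rw [hx1]
      _ ≤ ‖(1 - α k) • (x k - y)‖ + ‖α k • (S k - y)‖ := norm_add_le _ _
      _ = (1 - α k) * ‖x k - y‖ + α k * ‖S k - y‖ := by
          rw [norm_smul, norm_smul, Real.norm_eq_abs, Real.norm_eq_abs,
            abs_of_nonneg (by linarith [hα1 k]), abs_of_nonneg (by linarith [hα0 k])]
      _ ≤ ‖x k - y‖ := by nlinarith [hα0 k, hα1 k, norm_nonneg (x k - y)]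
  -- the Krasnoselskii–Mann identity
  have hid : ∀ k, D (k+1) = (1 - α k)*D k + α k * ‖S k - y₀‖^2 - α k*(1-α k)*(r k)^2 := by
    intro k
    have hx1 : x (k+1) = (1 - α k) • x k + α k • S k := hiter k
    simp only [hD, hr, hx1]
    exact km_identity (α k) (x k) (S k) y₀
  have hSy₀ : ∀ k, ‖S k - y₀‖ ≤ ‖x k - y₀‖ := hSyle y₀ hy₀cons hy₀C
  have hAle : ∀ k, A k ≤ D k := by
    intro k
    have h2 : avgMap (W k) y₀ = y₀ := havgy (W k) (hWds k) y₀ hy₀cons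
    have : ‖avgMap (W k) (x k) - y₀‖ ≤ ‖x k - y₀‖ := by
      calc ‖avgMap (W k) (x k) - y₀‖ = ‖avgMap (W k) (x k - y₀)‖ := by
            nth_rewrite 1 [← h2]; rw [avgMap_sub]
        _ ≤ ‖x k - y₀‖ := avgMap_norm_le (W k) (hWds k) _
    exact pow_le_pow_left₀ (norm_nonneg _) this 2
  have hSA : ∀ k, ‖S k - y₀‖^2 ≤ A k := by
    intro k
    have h2 : avgMap (W k) y₀ = y₀ := havgy (W k) (hWds k) y₀ hy₀cons
    have h1 : T k y₀ = y₀ := hfixmem y₀ hy₀C (T k) (hT k)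
    have : ‖S k - y₀‖ ≤ ‖avgMap (W k) (x k) - y₀‖ := by
      calc ‖S k - y₀‖ = ‖T k (avgMap (W k) (x k)) - T k y₀‖ := by rw [h1]
        _ ≤ ‖avgMap (W k) (x k) - y₀‖ := h𝒯nonexp (T k) (hT k) _ _
    exact pow_le_pow_left₀ (norm_nonneg _) this 2
  have hD1 : ∀ k, D (k+1) + (ε*ε) * (r k)^2 ≤ D k := by
    intro k
    have h1 := hid k
    have h2 : ‖S k - y₀‖^2 ≤ D k := le_trans (hSA k) (hAle k)
    have h3 : ε*ε ≤ α k * (1 - α k) :=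
      mul_le_mul (hα0 k) (by linarith [hα1 k]) (le_of_lt hε0) (by linarith [hα0 k])
    nlinarith [sq_nonneg (r k), hα0 k, hα1 k]
  have hD2 : ∀ k, D (k+1) + ε * e k ≤ D k := by
    intro k
    have h1 := hid k
    have h2 : ‖S k - y₀‖^2 ≤ A k := hSA k
    have h3 : A k ≤ D k := hAle k
    have h4 : 0 ≤ e k := by simp only [he]; linarith
    have h5 : 0 ≤ α k * (1 - α k) * (r k)^2 := by
      apply mul_nonneg (mul_nonneg (by linarith [hα0 k]) (by linarith [hα1 k])) (sq_nonneg _)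
    have h6 : e k = D k - A k := rfl
    nlinarith [hα0 k, hα1 k]
  have hDanti : Antitone D := antitone_nat_of_succ_le (by
    intro k
    have := hD1 k
    nlinarith [sq_nonneg (r k), sq_nonneg ε, mul_pos hε0 hε0, sq_nonneg (ε * r k)])
  have hDbdd : BddBelow (Set.range D) := by
    refine ⟨0, ?_⟩
    rintro v ⟨k, rfl⟩
    exact sq_nonneg _
  have hDt : Filter.Tendsto D Filter.atTop (nhds (⨅ k, D k)) := tendsto_atTop_ciInf hDanti hDbdd
  have hDt1 : Filter.Tendsto (fun k => D (k+1)) Filter.atTop (nhds (⨅ k, D k)) :=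
    hDt.comp (Filter.tendsto_add_atTop_nat 1)
  have hdiff0 : Filter.Tendsto (fun k => D k - D (k+1)) Filter.atTop (nhds 0) := by
    have := hDt.sub hDt1
    simpa using this
  have hr20 : Filter.Tendsto (fun k => (r k)^2) Filter.atTop (nhds 0) := by
    apply squeeze_zero (fun k => sq_nonneg _) (g := fun k => (D k - D (k+1)) / (ε*ε))
    · intro k
      rw [le_div_iff₀ (by positivity)]
      nlinarith [hD1 k]
    · simpa using hdiff0.div_const (ε*ε)
  have hr0 : Filter.Tendsto r Filter.atTop (nhds 0) := by
    have h := hr20.sqrt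
    simp only [Real.sqrt_zero] at h
    have heq : ∀ k, Real.sqrt ((r k)^2) = r k := fun k => Real.sqrt_sq (norm_nonneg _)
    simpa only [heq] using h
  have he0 : Filter.Tendsto e Filter.atTop (nhds 0) := by
    apply squeeze_zero (g := fun k => (D k - D (k+1)) / ε)
    · intro k
      have := hAle k
      simp only [he]; linarith
    · intro k
      rw [le_div_iff₀ hε0]
      nlinarith [hD2 k]
    · simpa using hdiff0.div_const ε
  have hinc0 : Filter.Tendsto (fun k => ‖x (k+1) - x k‖) Filter.atTop (nhds 0) := by
    apply squeeze_zero (fun k => norm_nonneg _) (g := r)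
    · intro k
      have hx1 : x (k+1) - x k = α k • (S k - x k) := by rw [hiter k]; module
      rw [hx1, norm_smul, Real.norm_eq_abs, abs_of_nonneg (by linarith [hα0 k])]
      have : ‖S k - x k‖ = r k := by rw [hr]; exact (norm_sub_rev _ _)
      rw [this]
      nlinarith [hα1 k, hα0 k, norm_nonneg (S k - x k), hε0, hε2,
        (by rw [hr, norm_sub_rev] : r k = ‖S k - x k‖)]
    · exact hr0
  have hdiffx : Filter.Tendsto (fun k => x (k+1) - x k) Filter.atTop (nhds 0) :=
    tendsto_zero_iff_norm_tendsto_zero.mpr hinc0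
  -- boundedness and a convergent subsequence
  have hnanti : Antitone (fun k => ‖x k - y₀‖) :=
    antitone_nat_of_succ_le (fun k => hstep y₀ hy₀cons hy₀C k)
  have hball : ∀ k, x k ∈ Metric.closedBall y₀ (‖x 0 - y₀‖) := by
    intro k
    rw [Metric.mem_closedBall, dist_eq_norm]
    exact hnanti (Nat.zero_le k)
  obtain ⟨xb, -, φ, hφmono, hφconv⟩ :=
    tendsto_subseq_of_bounded Metric.isBounded_closedBall hball
  have hφat : Filter.Tendsto φ Filter.atTop Filter.atTop := hφmono.tendsto_atTop
  -- shifted subsequences converge to the same limit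
  have hshift : ∀ l : ℕ, Filter.Tendsto (fun j => x (φ j + l)) Filter.atTop (nhds xb) := by
    intro l
    induction l with
    | zero => exact hφconv
    | succ l ih =>
      have hm : Filter.Tendsto (fun j => φ j + l) Filter.atTop Filter.atTop :=
        Filter.tendsto_atTop_mono (fun j => Nat.le_add_right (φ j) l) hφat
      have h1 : Filter.Tendsto (fun j => x (φ j + l + 1) - x (φ j + l))
          Filter.atTop (nhds 0) := hdiffx.comp hm
      have h2 := h1.add ih
      rw [zero_add] at h2
      have heq : (fun j => (x (φ j + l + 1) - x (φ j + l)) + x (φ j + l))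
          = fun j => x (φ j + (l + 1)) := by
        funext j
        rw [sub_add_cancel, ← add_assoc]
      rwa [heq] at h2
  -- pigeonhole: a subsequence along which the window of matrices is constant
  set 𝒮 : Set (Fin Q → Matrix (Fin N) (Fin N) ℝ) := Set.univ.pi (fun _ => 𝒲) with h𝒮
  have h𝒮fin : 𝒮.Finite := Set.Finite.pi (fun _ => h𝒲fin)
  set g : ℕ → (Fin Q → Matrix (Fin N) (Fin N) ℝ) := fun j l => W (φ j + 1 + (l : ℕ)) with hg
  have hgmem : ∀ j, g j ∈ 𝒮 := by
    intro j
    rw [h𝒮, Set.mem_univ_pi]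
    intro l
    exact hW _
  have hfreq : ∃ V ∈ 𝒮, ∃ᶠ j in Filter.atTop, g j = V := by
    by_contra hcon
    push_neg at hcon
    have hev : ∀ V ∈ h𝒮fin.toFinset, ∀ᶠ j in Filter.atTop, g j ≠ V := by
      intro V hV
      exact hcon V (h𝒮fin.mem_toFinset.mp hV)
    have hall : ∀ᶠ j in Filter.atTop, ∀ V ∈ h𝒮fin.toFinset, g j ≠ V :=
      (Filter.eventually_all_finset _).mpr hev
    obtain ⟨j, hj⟩ := hall.exists
    exact hj (g j) (h𝒮fin.mem_toFinset.mpr (hgmem j)) rfl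
  obtain ⟨V, hV𝒮, hVfreq⟩ := hfreq
  obtain ⟨ψ, hψmono, hψ⟩ := Filter.extraction_of_frequently_atTop hVfreq
  have hψat : Filter.Tendsto ψ Filter.atTop Filter.atTop := hψmono.tendsto_atTop
  have hVmem : ∀ l : Fin Q, V l ∈ 𝒲 := fun l => (Set.mem_univ_pi.mp hV𝒮) l
  have hWV : ∀ j (l : Fin Q), W (φ (ψ j) + 1 + (l:ℕ)) = V l := by
    intro j l
    exact congrFun (hψ j) l
  -- consensus at the cluster point: edges of the window matrices force equality
  have hEdge : ∀ (l : Fin Q) (a b : Fin N), 0 < V l a b → xb a = xb b := by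
    intro l a b hab
    obtain ⟨hVds, hVdiag⟩ := h𝒲 _ (hVmem l)
    set κ : ℝ := ∑ i, V l i a * V l i b with hκ
    have hκpos : 0 < κ := by
      have h1 : 0 < V l a a * V l a b := mul_pos (hVdiag a) hab
      have h2 : V l a a * V l a b ≤ κ :=
        Finset.single_le_sum (f := fun i => V l i a * V l i b)
          (fun i _ => mul_nonneg (hVds.1 i a) (hVds.1 i b)) (Finset.mem_univ a)
      linarith
    set m : ℕ → ℕ := fun j => φ (ψ j) + 1 + (l:ℕ) with hm
    have hmat : Filter.Tendsto m Filter.atTop Filter.atTop := by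
      apply Filter.tendsto_atTop_mono _ Filter.tendsto_id
      intro j
      have hj1 : j ≤ ψ j := hψmono.le_apply
      have hj2 : ψ j ≤ φ (ψ j) := hφmono.le_apply
      simp only [hm, id_eq]
      omega
    have hxm : Filter.Tendsto (fun j => x (m j)) Filter.atTop (nhds xb) := by
      have h1 := (hshift (1 + (l:ℕ))).comp hψat
      have heq : (fun j => x (φ (ψ j) + (1 + (l:ℕ)))) = fun j => x (m j) := by
        funext j
        simp only [hm, ← add_assoc]
      rw [← heq]
      exact h1
    have hem : Filter.Tendsto (fun j => e (m j)) Filter.atTop (nhds 0) := he0.comp hmat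
    have hbound : ∀ j, κ * ‖x (m j) a - x (m j) b‖^2 ≤ 2 * e (m j) := by
      intro j
      have hWm : W (m j) = V l := hWV j l
      have h2 : avgMap (W (m j)) y₀ = y₀ := havgy _ (hWds _) y₀ hy₀cons
      have h3 : avgMap (W (m j)) (x (m j)) - y₀ = avgMap (W (m j)) (x (m j) - y₀) := by
        nth_rewrite 1 [← h2]
        rw [avgMap_sub]
      have heq : e (m j) = ‖x (m j) - y₀‖^2 - ‖avgMap (W (m j)) (x (m j) - y₀)‖^2 := by
        simp only [he, hD, hA, h3]
      have hqf := qf (W (m j)) (hWds (m j)) (x (m j) - y₀)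
      rw [← heq] at hqf
      have hznorm : ∀ a' b' : Fin N, (x (m j) - y₀) a' - (x (m j) - y₀) b'
          = x (m j) a' - x (m j) b' := by
        intro a' b'
        simp only [PiLp.sub_apply, hy₀]
        abel
      set F : Fin N → Fin N → ℝ :=
        fun a' b' => (∑ i, W (m j) i a' * W (m j) i b') * ‖(x (m j) - y₀) a' - (x (m j) - y₀) b'‖^2
        with hF
      have hFnn : ∀ a' b', 0 ≤ F a' b' := by
        intro a' b'
        apply mul_nonneg _ (sq_nonneg _)
        exact Finset.sum_nonneg fun i _ => mul_nonneg ((hWds (m j)).1 i a') ((hWds (m j)).1 i b')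
      have h4 : F a b ≤ ∑ b', F a b' :=
        Finset.single_le_sum (fun b' _ => hFnn a b') (Finset.mem_univ b)
      have h5 : ∑ b', F a b' ≤ ∑ a', ∑ b', F a' b' :=
        Finset.single_le_sum (f := fun a' => ∑ b', F a' b')
          (fun a' _ => Finset.sum_nonneg fun b' _ => hFnn a' b') (Finset.mem_univ a)
      have h6 : F a b = κ * ‖x (m j) a - x (m j) b‖^2 := by
        rw [hF]
        simp only [hWm, hznorm, hκ]
      have h7 : ∑ a', ∑ b', F a' b' = 2 * e (m j) := by
        rw [hqf]; ring
      linarith [h4, h5]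
    have hc1 : Filter.Tendsto (fun j => x (m j) a) Filter.atTop (nhds (xb a)) :=
      coord_tendsto hxm a
    have hc2 : Filter.Tendsto (fun j => x (m j) b) Filter.atTop (nhds (xb b)) :=
      coord_tendsto hxm b
    have hlhs : Filter.Tendsto (fun j => κ * ‖x (m j) a - x (m j) b‖^2) Filter.atTop
        (nhds (κ * ‖xb a - xb b‖^2)) := (((hc1.sub hc2).norm).pow 2).const_mul κ
    have hrhs : Filter.Tendsto (fun j => 2 * e (m j)) Filter.atTop (nhds 0) := by
      simpa using hem.const_mul 2
    have hle : κ * ‖xb a - xb b‖^2 ≤ 0 := le_of_tendsto_of_tendsto' hlhs hrhs hbound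
    have h8 : ‖xb a - xb b‖^2 ≤ 0 := by
      nlinarith [hle, hκpos, sq_nonneg (‖xb a - xb b‖)]
    have h9 : ‖xb a - xb b‖^2 = 0 := le_antisymm h8 (sq_nonneg _)
    have h10 : ‖xb a - xb b‖ = 0 := by
      have := sq_eq_zero_iff.mp h9
      exact this
    exact sub_eq_zero.mp (norm_eq_zero.mp h10)
  have hcons : ∀ a b : Fin N, xb a = xb b := by
    intro a b
    have hrt := hWconn (φ (ψ 0)) a b
    induction hrt with
    | refl => rfl
    | @tail u v hseg hedge ih =>
      obtain ⟨l, hl1, hlQ, hpos⟩ := hedge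
      have hlt : l - 1 < Q := by omega
      have hl : φ (ψ 0) + l = φ (ψ 0) + 1 + (((⟨l-1, hlt⟩ : Fin Q)) : ℕ) := by
        have : (((⟨l-1, hlt⟩ : Fin Q)) : ℕ) = l - 1 := rfl
        omega
      rw [hl, hWV 0 ⟨l-1, hlt⟩] at hpos
      exact ih.trans (hEdge ⟨l-1, hlt⟩ u v hpos)
  -- every map in 𝒯 fixes the cluster point
  have hfix' : ∀ U ∈ 𝒯, U xb = xb := by
    intro U hU
    have hsel : ∀ j, ∃ l, l ≤ Q ∧ T (φ j + l) = U := by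
      intro j
      have hmem : U ∈ {U | ∃ l ≤ Q, T (φ j + l) = U} := by rw [hTQ (φ j)]; exact hU
      obtain ⟨l, hl, hTl⟩ := hmem
      exact ⟨l, hl, hTl⟩
    choose l hlQ hTl using hsel
    set m : ℕ → ℕ := fun j => φ j + l j with hm
    have hmat : Filter.Tendsto m Filter.atTop Filter.atTop := by
      apply Filter.tendsto_atTop_mono _ Filter.tendsto_id
      intro j
      have hj1 : j ≤ φ j := hφmono.le_apply
      simp only [hm, id_eq]
      omega
    have tele : ∀ (s t : ℕ), ‖x (s + t) - x s‖
        ≤ ∑ i ∈ Finset.range t, ‖x (s + i + 1) - x (s + i)‖ := by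
      intro s t
      induction t with
      | zero => simp
      | succ t ih =>
        have h1 : ‖x (s + (t+1)) - x s‖ ≤ ‖x (s + t + 1) - x (s + t)‖ + ‖x (s + t) - x s‖ := by
          calc ‖x (s + (t+1)) - x s‖
              = ‖(x (s + t + 1) - x (s + t)) + (x (s + t) - x s)‖ := by
                rw [show s + (t+1) = s + t + 1 from rfl]
                congr 1
                abel
            _ ≤ _ := norm_add_le _ _
        rw [Finset.sum_range_succ]
        linarith [ih]
    have hxmto : Filter.Tendsto (fun j => ‖x (m j) - xb‖) Filter.atTop (nhds 0) := by
      apply squeeze_zero (fun j => norm_nonneg _)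
        (g := fun j => ‖x (φ j) - xb‖ + ∑ i ∈ Finset.range Q, ‖x (φ j + i + 1) - x (φ j + i)‖)
      · intro j
        have h1 : ‖x (m j) - xb‖ ≤ ‖x (m j) - x (φ j)‖ + ‖x (φ j) - xb‖ := by
          calc ‖x (m j) - xb‖ = ‖(x (m j) - x (φ j)) + (x (φ j) - xb)‖ := by congr 1; abel
            _ ≤ _ := norm_add_le _ _
        have h2 := tele (φ j) (l j)
        have h3 : ∑ i ∈ Finset.range (l j), ‖x (φ j + i + 1) - x (φ j + i)‖
            ≤ ∑ i ∈ Finset.range Q, ‖x (φ j + i + 1) - x (φ j + i)‖ :=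
          Finset.sum_le_sum_of_subset_of_nonneg (Finset.range_subset_range.mpr (hlQ j))
            (fun i _ _ => norm_nonneg _)
        have h4 : ‖x (m j) - x (φ j)‖ = ‖x (φ j + l j) - x (φ j)‖ := rfl
        linarith [h1, h2, h3]
      · have hterm : ∀ i, Filter.Tendsto (fun j => ‖x (φ j + i + 1) - x (φ j + i)‖)
            Filter.atTop (nhds 0) := by
          intro i
          have hmi : Filter.Tendsto (fun j => φ j + i) Filter.atTop Filter.atTop :=
            Filter.tendsto_atTop_mono (fun j => Nat.le_add_right (φ j) i) hφat
          exact hinc0.comp hmi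
        have hsum : Filter.Tendsto
            (fun j => ∑ i ∈ Finset.range Q, ‖x (φ j + i + 1) - x (φ j + i)‖)
            Filter.atTop (nhds 0) := by
          have := tendsto_finset_sum (Finset.range Q) (fun i _ => hterm i)
          simpa using this
        have hfirst : Filter.Tendsto (fun j => ‖x (φ j) - xb‖) Filter.atTop (nhds 0) :=
          tendsto_iff_norm_sub_tendsto_zero.mp hφconv
        simpa using hfirst.add hsum
    have hrm : Filter.Tendsto (fun j => r (m j)) Filter.atTop (nhds 0) := hr0.comp hmat
    have hbound : ∀ j, ‖U xb - xb‖ ≤ 2 * ‖x (m j) - xb‖ + r (m j) := by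
      intro j
      have hTm : T (m j) = U := hTl j
      have havgxb : avgMap (W (m j)) xb = xb := havgy _ (hWds _) xb hcons
      have h1 : ‖U xb - U (avgMap (W (m j)) (x (m j)))‖ ≤ ‖xb - x (m j)‖ := by
        calc ‖U xb - U (avgMap (W (m j)) (x (m j)))‖
            ≤ ‖xb - avgMap (W (m j)) (x (m j))‖ := h𝒯nonexp U hU _ _
          _ = ‖avgMap (W (m j)) (xb - x (m j))‖ := by
              nth_rewrite 1 [← havgxb]
              rw [avgMap_sub]
          _ ≤ ‖xb - x (m j)‖ := avgMap_norm_le _ (hWds _) _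
      have h2 : ‖U (avgMap (W (m j)) (x (m j))) - x (m j)‖ = r (m j) := by
        rw [← hTm, hr]
        simp only [hS]
        exact norm_sub_rev _ _
      calc ‖U xb - xb‖
          = ‖(U xb - U (avgMap (W (m j)) (x (m j))))
              + (U (avgMap (W (m j)) (x (m j))) - x (m j)) + (x (m j) - xb)‖ := by
            congr 1; abel
        _ ≤ ‖U xb - U (avgMap (W (m j)) (x (m j)))‖
              + ‖U (avgMap (W (m j)) (x (m j))) - x (m j)‖ + ‖x (m j) - xb‖ :=
            norm_add₃_le
        _ ≤ ‖xb - x (m j)‖ + r (m j) + ‖x (m j) - xb‖ := by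
            rw [h2]
            exact add_le_add (add_le_add h1 le_rfl) le_rfl
        _ = 2 * ‖x (m j) - xb‖ + r (m j) := by rw [norm_sub_rev]; ring
    have hlim : Filter.Tendsto (fun j => 2 * ‖x (m j) - xb‖ + r (m j))
        Filter.atTop (nhds 0) := by
      have := (hxmto.const_mul 2).add hrm
      simpa using this
    have h0 : ‖U xb - xb‖ ≤ 0 := le_of_tendsto_of_tendsto' tendsto_const_nhds hlim hbound
    have hz : ‖U xb - xb‖ = 0 := le_antisymm h0 (norm_nonneg _)
    exact sub_eq_zero.mp (norm_eq_zero.mp hz)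
  have hxbC : ∀ i, xb i ∈ C₀ := by
    have hmem : xb ∈ ⋂ U ∈ 𝒯, Function.fixedPoints U :=
      Set.mem_iInter₂.mpr (fun U hU => hfix' U hU)
    rw [h𝒯fix] at hmem
    exact hmem
  -- final convergence via Fejér monotonicity
  refine ⟨xb, ?_, hcons, hxbC⟩
  have hanti2 : Antitone (fun k => ‖x k - xb‖) :=
    antitone_nat_of_succ_le (fun k => hstep xb hcons hxbC k)
  have hbdd2 : BddBelow (Set.range fun k => ‖x k - xb‖) := by
    refine ⟨0, ?_⟩
    rintro v ⟨k, rfl⟩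
    exact norm_nonneg _
  have hto : Filter.Tendsto (fun k => ‖x k - xb‖) Filter.atTop
      (nhds (⨅ k, ‖x k - xb‖)) := tendsto_atTop_ciInf hanti2 hbdd2
  have hsub0 : Filter.Tendsto (fun j => ‖x (φ j) - xb‖) Filter.atTop (nhds 0) :=
    tendsto_iff_norm_sub_tendsto_zero.mp hφconv
  have hsubI : Filter.Tendsto (fun j => ‖x (φ j) - xb‖) Filter.atTop
      (nhds (⨅ k, ‖x k - xb‖)) := hto.comp hφat
  have hI0 : (⨅ k, ‖x k - xb‖) = 0 := tendsto_nhds_unique hsubI hsub0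
  rw [tendsto_iff_norm_sub_tendsto_zero]
  rw [hI0] at hto
  exact hto
end
end

section
/- Let n ≥ 1 and let D be a set of indices. Let (U_r)_{r∈D} be a family of nonexpansive maps on EuclideanSpace ℝ (Fin n) such that C = ⋂_{r∈D} fix(U_r) is nonempty. Let ε ∈ (0, 1/2] and let (α_k)_{k∈ℕ} satisfy α_k ∈ [ε, 1−ε] for all k. Let j : ℕ → D be an admissible sequence, i.e., for every r ∈ D there exists m ∈ ℕ such that for all n' ∈ ℕ there exists l ≤ m with j(n'+l) = r. Then for every initial point x⁰, the sequence generated by x^{k+1} = (1−α_k) x^k + α_k U_{j(k)}(x^k) converges to some point x̄ ∈ C. -/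
open scoped BigOperators

noncomputable section

/-- Convex-combination norm identity in a real inner product space. -/
lemma browder_combo_norm_sq {E : Type*} [NormedAddCommGroup E] [InnerProductSpace ℝ E]
    (a b : E) (t : ℝ) :
    ‖(1 - t) • a + t • b‖ ^ 2
      = (1 - t) * ‖a‖ ^ 2 + t * ‖b‖ ^ 2 - t * (1 - t) * ‖b - a‖ ^ 2 := by
  rw [← real_inner_self_eq_norm_sq, ← real_inner_self_eq_norm_sq a,
    ← real_inner_self_eq_norm_sq b, ← real_inner_self_eq_norm_sq (b - a)]
  simp only [inner_add_left, inner_add_right, inner_sub_left, inner_sub_right,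
    real_inner_smul_left, real_inner_smul_right, real_inner_comm a b]
  ring

lemma browder_le_of_sq_le_sq {a b : ℝ} (ha : 0 ≤ a) (hb : 0 ≤ b) (h : a ^ 2 ≤ b ^ 2) :
    a ≤ b := by nlinarith

/-- Browder's theorem (Lemma 1): the Krasnoselskii–Mann iteration driven by an
admissible sequence of nonexpansive maps converges to a common fixed point. -/
theorem browder_admissible_convergence
    (n : ℕ) (hn : 1 ≤ n) {ι : Type*} (D : Set ι)
    (U : ι → (EuclideanSpace ℝ (Fin n) → EuclideanSpace ℝ (Fin n)))
    (hU : ∀ r ∈ D, Nonexpansive (U r))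
    (C : Set (EuclideanSpace ℝ (Fin n)))
    (hC : C = ⋂ r ∈ D, Function.fixedPoints (U r)) (hCne : C.Nonempty)
    (ε : ℝ) (hε : ε ∈ Set.Ioc (0 : ℝ) (1 / 2))
    (α : ℕ → ℝ) (hα : ∀ k, α k ∈ Set.Icc ε (1 - ε))
    (j : ℕ → ι) (hjD : ∀ k, j k ∈ D)
    (hadm : ∀ r ∈ D, ∃ m : ℕ, ∀ n' : ℕ, ∃ l ≤ m, j (n' + l) = r)
    (x : ℕ → EuclideanSpace ℝ (Fin n)) (x0 : EuclideanSpace ℝ (Fin n))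
    (hx0 : x 0 = x0)
    (hiter : ∀ k, x (k + 1) = (1 - α k) • x k + α k • U (j k) (x k)) :
    ∃ xb ∈ C, Filter.Tendsto x Filter.atTop (nhds xb) := by
  classical
  obtain ⟨p, hp⟩ := hCne
  have hεpos : 0 < ε := hε.1
  have hεhalf : ε ≤ 1 / 2 := hε.2
  have hfix : ∀ q ∈ C, ∀ r ∈ D, U r q = q := by
    intro q hq r hr
    rw [hC] at hq
    exact Set.mem_iInter₂.1 hq r hr
  set res : ℕ → ℝ := fun k => ‖U (j k) (x k) - x k‖ with hres_def
  have hres_nonneg : ∀ k, 0 ≤ res k := fun k => norm_nonneg _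
  -- Key Fejér-type inequality
  have key : ∀ q ∈ C, ∀ k,
      ‖x (k + 1) - q‖ ^ 2 ≤ ‖x k - q‖ ^ 2 - ε ^ 2 * res k ^ 2 := by
    intro q hq k
    have hUq : U (j k) q = q := hfix q hq (j k) (hjD k)
    have hxk1 : x (k + 1) - q
        = (1 - α k) • (x k - q) + α k • (U (j k) (x k) - q) := by
      rw [hiter k]; module
    have hb : ‖U (j k) (x k) - q‖ ≤ ‖x k - q‖ := by
      have h := hU (j k) (hjD k) (x k) q
      rwa [hUq] at h
    have hba : U (j k) (x k) - q - (x k - q) = U (j k) (x k) - x k := by abel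
    have hcombo := browder_combo_norm_sq (x k - q) (U (j k) (x k) - q) (α k)
    rw [hba] at hcombo
    rw [hxk1, hcombo]
    have hα1 := (hα k).1
    have hα2 := (hα k).2
    have hA : 0 ≤ ‖x k - q‖ := norm_nonneg _
    have hB : 0 ≤ ‖U (j k) (x k) - q‖ := norm_nonneg _
    have hB2 : ‖U (j k) (x k) - q‖ ^ 2 ≤ ‖x k - q‖ ^ 2 := by nlinarith
    have hprod : ε * ε ≤ α k * (1 - α k) :=
      mul_le_mul hα1 (by linarith) (le_of_lt hεpos) (by linarith)
    have h1 : 0 ≤ α k * (‖x k - q‖ ^ 2 - ‖U (j k) (x k) - q‖ ^ 2) :=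
      mul_nonneg (by linarith) (by linarith)
    have h2 : 0 ≤ (α k * (1 - α k) - ε * ε) * res k ^ 2 :=
      mul_nonneg (by linarith) (sq_nonneg _)
    nlinarith
  have hmono : ∀ q ∈ C, ∀ k, ‖x (k + 1) - q‖ ≤ ‖x k - q‖ := by
    intro q hq k
    have h := key q hq k
    have hsq : ‖x (k + 1) - q‖ ^ 2 ≤ ‖x k - q‖ ^ 2 := by
      nlinarith [sq_nonneg ε, sq_nonneg (res k), mul_nonneg (sq_nonneg ε) (sq_nonneg (res k))]
    exact browder_le_of_sq_le_sq (norm_nonneg _) (norm_nonneg _) hsq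
  -- Summability of residuals
  have hsum_le : ∀ N, ∑ k ∈ Finset.range N, ε ^ 2 * res k ^ 2 ≤ ‖x 0 - p‖ ^ 2 := by
    intro N
    have htel : ∀ N, ∑ k ∈ Finset.range N, ε ^ 2 * res k ^ 2
        ≤ ‖x 0 - p‖ ^ 2 - ‖x N - p‖ ^ 2 := by
      intro N
      induction N with
      | zero => simp
      | succ N ih =>
        rw [Finset.sum_range_succ]
        have h := key p hp N
        linarith
    have := htel N
    nlinarith [sq_nonneg (‖x N - p‖)]
  have hsummable : Summable (fun k => ε ^ 2 * res k ^ 2) :=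
    summable_of_sum_range_le (fun k => mul_nonneg (sq_nonneg _) (sq_nonneg _)) hsum_le
  have hres_sq_0 : Filter.Tendsto (fun k => res k ^ 2) Filter.atTop (nhds 0) := by
    have h0 := hsummable.tendsto_atTop_zero
    have h1 : Filter.Tendsto (fun k => (ε ^ 2)⁻¹ * (ε ^ 2 * res k ^ 2))
        Filter.atTop (nhds ((ε ^ 2)⁻¹ * 0)) := h0.const_mul _
    have hne : (ε : ℝ) ^ 2 ≠ 0 := pow_ne_zero _ (ne_of_gt hεpos)
    simpa [inv_mul_cancel_left₀ hne] using h1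
  have hres0 : Filter.Tendsto res Filter.atTop (nhds 0) := by
    have h := (Real.continuous_sqrt.tendsto 0).comp hres_sq_0
    have heq : (fun k => Real.sqrt (res k ^ 2)) = res :=
      funext fun k => Real.sqrt_sq (hres_nonneg k)
    simpa [Function.comp_def, heq] using h
  -- step differences
  have hdiff : ∀ k, ‖x (k + 1) - x k‖ ≤ res k := by
    intro k
    have hstep : x (k + 1) - x k = α k • (U (j k) (x k) - x k) := by
      rw [hiter k]; module
    rw [hstep, norm_smul, Real.norm_eq_abs,
      abs_of_nonneg (le_trans (le_of_lt hεpos) (hα k).1)]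
    have := (hα k).2
    nlinarith [hres_nonneg k]
  -- convergent subsequence
  have hball : ∀ k, x k ∈ Metric.closedBall p ‖x 0 - p‖ := by
    intro k
    have hanti : Antitone (fun k => ‖x k - p‖) := antitone_nat_of_succ_le (hmono p hp)
    have := hanti (Nat.zero_le k)
    simpa [Metric.mem_closedBall, dist_eq_norm] using this
  obtain ⟨xb, -, φ, hφ, hxφ⟩ :=
    tendsto_subseq_of_bounded Metric.isBounded_closedBall hball
  have hφ_ge : ∀ i, i ≤ φ i := fun i => hφ.id_le i
  -- `xb` is a common fixed point
  have hxbC : xb ∈ C := by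
    rw [hC]
    refine Set.mem_iInter₂.2 fun r hr => ?_
    obtain ⟨m, hm⟩ := hadm r hr
    choose l hlm hlj using fun i => hm (φ i)
    set y : ℕ → EuclideanSpace ℝ (Fin n) := fun i => x (φ i + l i) with hy_def
    have hydiff0 : Filter.Tendsto (fun i => y i - x (φ i)) Filter.atTop (nhds 0) := by
      have hbound : ∀ i, ‖y i - x (φ i)‖ ≤ ∑ t ∈ Finset.range m, res (φ i + t) := by
        intro i
        have h1 : dist (x (φ i)) (x (φ i + l i))
            ≤ ∑ t ∈ Finset.range (l i), dist (x (φ i + t)) (x (φ i + t + 1)) := by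
          have := dist_le_range_sum_dist (fun t => x (φ i + t)) (l i)
          simpa [add_assoc] using this
        have h2 : ∑ t ∈ Finset.range (l i), dist (x (φ i + t)) (x (φ i + t + 1))
            ≤ ∑ t ∈ Finset.range (l i), res (φ i + t) := by
          refine Finset.sum_le_sum fun t _ => ?_
          rw [dist_comm, dist_eq_norm]
          exact hdiff (φ i + t)
        have h3 : ∑ t ∈ Finset.range (l i), res (φ i + t)
            ≤ ∑ t ∈ Finset.range m, res (φ i + t) := by
          refine Finset.sum_le_sum_of_subset_of_nonneg
            (Finset.range_subset_range.2 (hlm i)) fun t _ _ => hres_nonneg _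
        calc ‖y i - x (φ i)‖ = dist (x (φ i)) (x (φ i + l i)) := by
              rw [dist_eq_norm, norm_sub_rev]
          _ ≤ ∑ t ∈ Finset.range m, res (φ i + t) := le_trans h1 (le_trans h2 h3)
      have hsum0 : Filter.Tendsto (fun i => ∑ t ∈ Finset.range m, res (φ i + t))
          Filter.atTop (nhds 0) := by
        have := tendsto_finset_sum (Finset.range m)
          (fun t _ => (hres0.comp (Filter.tendsto_atTop_mono
            (fun i => le_trans (hφ_ge i) (Nat.le_add_right _ t)) Filter.tendsto_id)
            : Filter.Tendsto (fun i => res (φ i + t)) Filter.atTop (nhds 0)))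
        simpa using this
      exact squeeze_zero_norm hbound hsum0
    have hy : Filter.Tendsto y Filter.atTop (nhds xb) := by
      have := hydiff0.add hxφ
      simpa [Function.comp_def] using this
    have hres_y : Filter.Tendsto (fun i => ‖U r (y i) - y i‖) Filter.atTop (nhds 0) := by
      have hT : Filter.Tendsto (fun i => φ i + l i) Filter.atTop Filter.atTop :=
        Filter.tendsto_atTop_mono (fun i => le_trans (hφ_ge i) (Nat.le_add_right _ _))
          Filter.tendsto_id
      have h := hres0.comp hT
      have heq : (fun i => ‖U r (y i) - y i‖) = (fun i => res (φ i + l i)) := by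
        funext i
        simp only [hy_def, hres_def, hlj i]
      rw [heq]
      exact h
    have hcont : Continuous (U r) := by
      refine (LipschitzWith.of_dist_le_mul (K := 1) fun a b => ?_).continuous
      simpa [dist_eq_norm] using hU r hr a b
    have hlim1 : Filter.Tendsto (fun i => U r (y i) - y i) Filter.atTop
        (nhds (U r xb - xb)) := ((hcont.tendsto xb).comp hy).sub hy
    have hlim2 : Filter.Tendsto (fun i => U r (y i) - y i) Filter.atTop (nhds 0) :=
      tendsto_zero_iff_norm_tendsto_zero.2 hres_y
    have : U r xb - xb = 0 := tendsto_nhds_unique hlim1 hlim2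
    have : U r xb = xb := by
      have := sub_eq_zero.1 this; exact this
    exact this
  -- conclude convergence of the whole sequence
  refine ⟨xb, hxbC, ?_⟩
  have hanti : Antitone (fun k => ‖x k - xb‖) := antitone_nat_of_succ_le (hmono xb hxbC)
  have hsubnorm : Filter.Tendsto (fun i => ‖x (φ i) - xb‖) Filter.atTop (nhds 0) := by
    have := tendsto_iff_norm_sub_tendsto_zero.1 hxφ
    simpa [Function.comp_def] using this
  have hnorm0 : Filter.Tendsto (fun k => ‖x k - xb‖) Filter.atTop (nhds 0) := by
    refine Metric.tendsto_atTop.2 fun δ hδ => ?_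
    obtain ⟨I, hI⟩ := Metric.tendsto_atTop.1 hsubnorm δ hδ
    refine ⟨φ I, fun k hk => ?_⟩
    have h1 : ‖x k - xb‖ ≤ ‖x (φ I) - xb‖ := hanti hk
    have h2 := hI I le_rfl
    rw [Real.dist_eq, sub_zero] at h2 ⊢
    rw [abs_of_nonneg (norm_nonneg _)] at h2 ⊢
    linarith
  exact tendsto_iff_norm_sub_tendsto_zero.2 hnorm0
end
end

section
/- Let E be a real normed vector space and let T₁, T₂ : E → E be nonexpansive maps. Then the composition T₁ ∘ T₂ is nonexpansive. Moreover, if in addition either T₁ or T₂ is a paracontraction and fix(T₁) ∩ fix(T₂) ≠ ∅, then fix(T₁ ∘ T₂) = fix(T₁) ∩ fix(T₂). -/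
open scoped BigOperators

noncomputable section

/-- Lemma 3: the composition of nonexpansive operators is nonexpansive; if moreover
one of them is a paracontraction and their fixed-point sets intersect, then the
fixed-point set of the composition is the intersection of the fixed-point sets. -/
theorem composition_nonexpansive
    {E : Type*} [NormedAddCommGroup E] [NormedSpace ℝ E]
    (T₁ T₂ : E → E) (h₁ : Nonexpansive T₁) (h₂ : Nonexpansive T₂) :
    Nonexpansive (T₁ ∘ T₂) ∧
    ((Paracontraction T₁ ∨ Paracontraction T₂) →
      (Function.fixedPoints T₁ ∩ Function.fixedPoints T₂).Nonempty →
      Function.fixedPoints (T₁ ∘ T₂) =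
        Function.fixedPoints T₁ ∩ Function.fixedPoints T₂) := by
  constructor
  · intro x y
    exact le_trans (h₁ (T₂ x) (T₂ y)) (h₂ x y)
  · rintro hpc ⟨z, hz₁, hz₂⟩
    have hz₁' : T₁ z = z := hz₁
    have hz₂' : T₂ z = z := hz₂
    ext x
    constructor
    · intro hx
      have hx' : T₁ (T₂ x) = x := hx
      -- chain of inequalities
      have key1 : ‖x - z‖ ≤ ‖T₂ x - z‖ := by
        calc ‖x - z‖ = ‖T₁ (T₂ x) - T₁ z‖ := by rw [hx', hz₁']
          _ ≤ ‖T₂ x - z‖ := h₁ _ _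
      have key2 : ‖T₂ x - z‖ ≤ ‖x - z‖ := by
        calc ‖T₂ x - z‖ = ‖T₂ x - T₂ z‖ := by rw [hz₂']
          _ ≤ ‖x - z‖ := h₂ _ _
      have h2fix : T₂ x = x := by
        rcases hpc with ⟨_, hp⟩ | ⟨_, hp⟩
        · by_contra hne
          have hT1ne : T₁ (T₂ x) ≠ T₂ x := by
            rw [hx']; exact fun h => hne h.symm
          have := hp (T₂ x) z hT1ne hz₁'
          rw [hx'] at this
          exact absurd (lt_of_lt_of_le this key2) (lt_irrefl _)
        · by_contra hne
          have := hp x z hne hz₂'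
          exact absurd (lt_of_le_of_lt key1 this) (lt_irrefl _)
      have h1fix : T₁ x = x := by rw [← h2fix, hx', h2fix]
      exact ⟨h1fix, h2fix⟩
    · rintro ⟨hx₁, hx₂⟩
      show T₁ (T₂ x) = x
      rw [show T₂ x = x from hx₂]; exact hx₁
end
end

section
/- Let E be a real normed vector space and let M₁, M₂ : E → E be paracontractions with respect to the norm of E such that fix(M₁) ∩ fix(M₂) ≠ ∅. Then the composition M₁ ∘ M₂ is a paracontraction with respect to the norm of E, and fix(M₁ ∘ M₂) = fix(M₁) ∩ fix(M₂). -/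
open scoped BigOperators

noncomputable section

/-- Lemma 4: the composition of paracontractions with intersecting fixed-point
sets is a paracontraction whose fixed-point set is the intersection. -/
theorem composition_paracontraction
    {E : Type*} [NormedAddCommGroup E] [NormedSpace ℝ E]
    (M₁ M₂ : E → E) (h₁ : Paracontraction M₁) (h₂ : Paracontraction M₂)
    (hfix : (Function.fixedPoints M₁ ∩ Function.fixedPoints M₂).Nonempty) :
    Paracontraction (M₁ ∘ M₂) ∧
    Function.fixedPoints (M₁ ∘ M₂) =
      Function.fixedPoints M₁ ∩ Function.fixedPoints M₂ := by
  obtain ⟨z, hz₁, hz₂⟩ := hfix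
  simp only [Function.mem_fixedPoints, Function.IsFixedPt] at hz₁ hz₂
  -- key: fixed points of composition are common fixed points
  have key : ∀ x, M₁ (M₂ x) = x → M₂ x = x ∧ M₁ x = x := by
    intro x hx
    by_cases hM2 : M₂ x = x
    · exact ⟨hM2, by rwa [hM2] at hx⟩
    · exfalso
      have h2 : ‖M₂ x - z‖ < ‖x - z‖ := h₂.2 x z hM2 hz₂
      have : ‖M₁ (M₂ x) - z‖ ≤ ‖M₂ x - z‖ := by
        by_cases hM1 : M₁ (M₂ x) = M₂ x
        · rw [hM1]
        · exact le_of_lt (h₁.2 (M₂ x) z hM1 hz₁)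
      rw [hx] at this
      exact absurd (lt_of_le_of_lt this h2) (lt_irrefl _)
  have hset : Function.fixedPoints (M₁ ∘ M₂) =
      Function.fixedPoints M₁ ∩ Function.fixedPoints M₂ := by
    ext x
    simp only [Set.mem_inter_iff, Function.mem_fixedPoints, Function.IsFixedPt,
      Function.comp_apply]
    constructor
    · intro hx
      exact ⟨(key x hx).2, (key x hx).1⟩
    · rintro ⟨h1, h2⟩
      rw [h2, h1]
  refine ⟨⟨h₁.1.comp h₂.1, ?_⟩, hset⟩
  intro x y hxy hy
  simp only [Function.comp_apply] at hxy hy ⊢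
  have hy' : M₁ y = y ∧ M₂ y = y := by
    have := key y hy
    exact ⟨this.2, this.1⟩
  by_cases hM2 : M₂ x = x
  · rw [hM2] at hxy ⊢
    exact h₁.2 x y hxy hy'.1
  · have h2 : ‖M₂ x - y‖ < ‖x - y‖ := h₂.2 x y hM2 hy'.2
    have : ‖M₁ (M₂ x) - y‖ ≤ ‖M₂ x - y‖ := by
      by_cases hM1 : M₁ (M₂ x) = M₂ x
      · rw [hM1]
      · exact le_of_lt (h₁.2 (M₂ x) y hM1 hy'.1)
    exact lt_of_le_of_lt this h2
end
end

section
/- Let E be a finite-dimensional real normed vector space and let ℳ be a finite family of paracontractions on E (with respect to the norm of E) such that ⋂_{M∈ℳ} fix(M) ≠ ∅. Let (M^k)_{k∈ℕ} be any sequence with M^k ∈ ℳ for all k, and let (x^k)_{k∈ℕ} be generated by x^{k+1} = M^k(x^k) from any initial point x⁰ ∈ E. Then (x^k) converges to some point x̄ ∈ E such that M(x̄) = x̄ for every operator M ∈ ℳ that occurs infinitely often in the sequence (M^k), i.e., for every M such that {k | M^k = M} is infinite. -/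
open scoped BigOperators

noncomputable section

open Filter Topology

section AuxLemmas

variable {E : Type*} [NormedAddCommGroup E]

/-- A paracontraction does not increase distance to any of its fixed points. -/
lemma para_norm_le {M : E → E} (hM : Paracontraction M) {w z : E} (hz : M z = z) :
    ‖M w - z‖ ≤ ‖w - z‖ := by
  by_cases h : M w = w
  · rw [h]
  · exact (hM.2 w z h hz).le

/-- Chain lemma: if each step from `a` to `b` does not increase distance to `z`,
then distance to `z` at `b` is at most that at `a`. -/
lemma norm_le_of_chain (x : ℕ → E) (z : E) {a b : ℕ} (hab : a ≤ b)
    (h : ∀ k, a ≤ k → k < b → ‖x (k + 1) - z‖ ≤ ‖x k - z‖) :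
    ‖x b - z‖ ≤ ‖x a - z‖ := by
  induction b, hab using Nat.le_induction with
  | base => exact le_rfl
  | succ n hn ih =>
      calc ‖x (n + 1) - z‖ ≤ ‖x n - z‖ := h n hn (Nat.lt_succ_self n)
        _ ≤ ‖x a - z‖ := ih (fun k hk1 hk2 => h k hk1 (hk2.trans (Nat.lt_succ_self n)))

/-- Key step: if a subsequence converges to `z` and a single operator `M` is applied
at every index of the subsequence, then `M z = z`. -/
lemma key_step {E : Type*} [NormedAddCommGroup E]
    (ℳ : Set (E → E)) (hpara : ∀ M ∈ ℳ, Paracontraction M)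
    (Mseq : ℕ → (E → E)) (x : ℕ → E)
    (hiter : ∀ k, x (k + 1) = Mseq k (x k))
    (y : E) (hy : ∀ M ∈ ℳ, M y = y)
    (dinf : ℝ) (hd : Tendsto (fun k => ‖x k - y‖) atTop (𝓝 dinf))
    (z : E) (M : E → E) (hM : M ∈ ℳ) (φ : ℕ → ℕ)
    (hφ : Tendsto φ atTop atTop) (hconst : ∀ j, Mseq (φ j) = M)
    (hconv : Tendsto (x ∘ φ) atTop (𝓝 z)) : M z = z := by
  have h1 : Tendsto (fun j => ‖x (φ j) - y‖) atTop (𝓝 ‖z - y‖) :=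
    (hconv.sub_const y).norm
  have h1' : Tendsto (fun j => ‖x (φ j) - y‖) atTop (𝓝 dinf) := hd.comp hφ
  have e1 : ‖z - y‖ = dinf := tendsto_nhds_unique h1 h1'
  have h2 : Tendsto (fun j => x (φ j + 1)) atTop (𝓝 (M z)) := by
    have h2' : Tendsto (fun j => M (x (φ j))) atTop (𝓝 (M z)) :=
      ((hpara M hM).1.tendsto z).comp hconv
    exact h2'.congr (fun j => by rw [hiter (φ j), hconst j])
  have hφ1 : Tendsto (fun j => φ j + 1) atTop atTop :=
    tendsto_atTop_mono (fun j => Nat.le_succ (φ j)) hφ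
  have h3 : Tendsto (fun j => ‖x (φ j + 1) - y‖) atTop (𝓝 dinf) := hd.comp hφ1
  have e2 : ‖M z - y‖ = dinf := tendsto_nhds_unique (h2.sub_const y).norm h3
  by_contra h
  have := (hpara M hM).2 z y h (hy M hM)
  rw [e1, e2] at this
  exact lt_irrefl _ this

/-- Main induction: enlarging the set of operators known to fix the limit point. -/
lemma main_induction {E : Type*} [NormedAddCommGroup E] [DecidableEq (E → E)]
    (ℳ : Set (E → E)) (hfin : ℳ.Finite)
    (hpara : ∀ M ∈ ℳ, Paracontraction M)
    (Mseq : ℕ → (E → E)) (hMseq : ∀ k, Mseq k ∈ ℳ)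
    (x : ℕ → E) (hiter : ∀ k, x (k + 1) = Mseq k (x k))
    (y : E) (hy : ∀ M ∈ ℳ, M y = y)
    (dinf : ℝ) (hd : Tendsto (fun k => ‖x k - y‖) atTop (𝓝 dinf))
    (z : E) :
    ∀ (n : ℕ) (S : Finset (E → E)) (φ : ℕ → ℕ),
      (∀ M ∈ S, M z = z) →
      ((hfin.toFinset \ S).card ≤ n) →
      Tendsto φ atTop atTop → Tendsto (x ∘ φ) atTop (𝓝 z) →
      ∀ M ∈ ℳ, {k | Mseq k = M}.Infinite → M z = z := by
  intro n
  induction n with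
  | zero =>
      intro S φ hSfix hcard hφ hconv M hM hMinf
      by_cases hMS : M ∈ S
      · exact hSfix M hMS
      · exfalso
        have hmem : M ∈ hfin.toFinset \ S := by
          rw [Finset.mem_sdiff, Set.Finite.mem_toFinset]
          exact ⟨hM, hMS⟩
        have := Finset.card_pos.mpr ⟨M, hmem⟩
        omega
  | succ n ih =>
      intro S φ hSfix hcard hφ hconv M hM hMinf
      by_cases hMS : M ∈ S
      · exact hSfix M hMS
      classical
      -- for each j, there is k ≥ φ j with Mseq k ∉ S (namely some k with Mseq k = M)
      have hex : ∀ j : ℕ, ∃ k, φ j ≤ k ∧ Mseq k ∉ S := by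
        intro j
        obtain ⟨k, hk1, hk2⟩ := hMinf.exists_gt (φ j)
        exact ⟨k, hk2.le, by rw [Set.mem_setOf_eq] at hk1; rw [hk1]; exact hMS⟩
      let s : ℕ → ℕ := fun j => Nat.find (hex j)
      have hs_spec : ∀ j, φ j ≤ s j ∧ Mseq (s j) ∉ S := fun j => Nat.find_spec (hex j)
      have hs_min : ∀ j k, φ j ≤ k → k < s j → Mseq k ∈ S := by
        intro j k hk1 hk2
        by_contra hc
        exact Nat.find_min (hex j) hk2 ⟨hk1, hc⟩
      have hs_top : Tendsto s atTop atTop :=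
        tendsto_atTop_mono (fun j => (hs_spec j).1) hφ
      -- x ∘ s converges to z
      have hle : ∀ j, ‖x (s j) - z‖ ≤ ‖x (φ j) - z‖ := by
        intro j
        refine norm_le_of_chain x z (hs_spec j).1 ?_
        intro k hk1 hk2
        have hkS : Mseq k ∈ S := hs_min j k hk1 hk2
        have hz : Mseq k z = z := hSfix _ hkS
        rw [hiter k]
        exact para_norm_le (hpara _ (hMseq k)) hz
      have hconv0 : Tendsto (fun j => ‖x (φ j) - z‖) atTop (𝓝 0) := by
        have := (hconv.sub_const z).norm
        simpa using this
      have hconvs : Tendsto (x ∘ s) atTop (𝓝 z) := by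
        rw [tendsto_iff_norm_sub_tendsto_zero]
        exact squeeze_zero (fun j => norm_nonneg _) hle hconv0
      -- pigeonhole: pick an operator occurring frequently along s
      have hpig : ∃ M' ∈ ℳ, ∃ᶠ j in atTop, Mseq (s j) = M' := by
        by_contra hc
        push_neg at hc
        have hall : ∀ᶠ j in atTop, ∀ M' ∈ hfin.toFinset, ¬ Mseq (s j) = M' := by
          rw [Filter.eventually_all_finset]
          intro M' hM'
          exact hc M' (hfin.mem_toFinset.mp hM')
        obtain ⟨j, hj⟩ := hall.exists
        exact hj (Mseq (s j)) (hfin.mem_toFinset.mpr (hMseq (s j))) rfl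
      obtain ⟨M', hM'mem, hM'freq⟩ := hpig
      obtain ⟨ψ, hψmono, hψ⟩ := Filter.extraction_of_frequently_atTop hM'freq
      have hM'S : M' ∉ S := by
        have := (hs_spec (ψ 0)).2
        rw [hψ 0] at this
        exact this
      -- the new subsequence
      have hφ'top : Tendsto (fun j => s (ψ j)) atTop atTop :=
        hs_top.comp hψmono.tendsto_atTop
      have hφ'conv : Tendsto (x ∘ fun j => s (ψ j)) atTop (𝓝 z) :=
        hconvs.comp hψmono.tendsto_atTop
      have hM'fix : M' z = z :=
        key_step ℳ hpara Mseq x hiter y hy dinf hd z M' hM'mem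
          (fun j => s (ψ j)) hφ'top hψ hφ'conv
      -- M' occurs infinitely often
      have hM'inf : {k | Mseq k = M'}.Infinite := by
        apply Set.infinite_of_not_bddAbove
        rintro ⟨B, hB⟩
        obtain ⟨j, hj⟩ := (hφ'top.eventually_gt_atTop B).exists
        exact absurd (hB (hψ j)) (not_le.mpr hj)
      -- recurse with the enlarged set
      have hcard' : ((hfin.toFinset \ insert M' S).card ≤ n) := by
        have hsub : hfin.toFinset \ insert M' S ⊂ hfin.toFinset \ S := by
          constructor
          · exact Finset.sdiff_subset_sdiff le_rfl (Finset.subset_insert _ _)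
          · intro hsub2
            have hmem : M' ∈ hfin.toFinset \ S := by
              rw [Finset.mem_sdiff, Set.Finite.mem_toFinset]
              exact ⟨hM'mem, hM'S⟩
            have := hsub2 hmem
            rw [Finset.mem_sdiff] at this
            exact this.2 (Finset.mem_insert_self _ _)
        have := Finset.card_lt_card hsub
        omega
      refine ih (insert M' S) (fun j => s (ψ j)) ?_ hcard' hφ'top hφ'conv M hM hMinf
      intro N hN
      rcases Finset.mem_insert.mp hN with h | h
      · rw [h]; exact hM'fix
      · exact hSfix N h

end AuxLemmas

/-- Lemma 6 (Elsner–Koltracht–Neumann): iterating paracontractions from a finite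
family with a common fixed point converges to a common fixed point of the
operators occurring infinitely often. -/
theorem elsner_finite_family_convergence
    {E : Type*} [NormedAddCommGroup E] [NormedSpace ℝ E] [FiniteDimensional ℝ E]
    (ℳ : Set (E → E)) (hfin : ℳ.Finite)
    (hpara : ∀ M ∈ ℳ, Paracontraction M)
    (hcommon : (⋂ M ∈ ℳ, Function.fixedPoints M).Nonempty)
    (Mseq : ℕ → (E → E)) (hMseq : ∀ k, Mseq k ∈ ℳ)
    (x : ℕ → E) (x0 : E) (hx0 : x 0 = x0)
    (hiter : ∀ k, x (k + 1) = Mseq k (x k)) :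
    ∃ xb : E, Filter.Tendsto x Filter.atTop (nhds xb) ∧
      ∀ M ∈ ℳ, {k : ℕ | Mseq k = M}.Infinite → M xb = xb := by
  classical
  obtain ⟨y, hy0⟩ := hcommon
  have hy : ∀ M ∈ ℳ, M y = y := by
    intro M hM
    have := Set.mem_iInter₂.mp hy0 M hM
    exact this
  -- the distances to y are antitone
  have hanti : Antitone (fun k => ‖x k - y‖) := by
    apply antitone_nat_of_succ_le
    intro k
    rw [hiter k]
    exact para_norm_le (hpara _ (hMseq k)) (hy _ (hMseq k))
  have hbdd : BddBelow (Set.range fun k => ‖x k - y‖) :=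
    ⟨0, by rintro _ ⟨k, rfl⟩; exact norm_nonneg _⟩
  have hd : Tendsto (fun k => ‖x k - y‖) atTop (𝓝 (⨅ k, ‖x k - y‖)) :=
    tendsto_atTop_ciInf hanti hbdd
  set dinf := ⨅ k, ‖x k - y‖ with hdinf
  -- the sequence is bounded, hence has a convergent subsequence
  have hball : ∀ k, x k ∈ Metric.closedBall y ‖x 0 - y‖ := by
    intro k
    rw [Metric.mem_closedBall, dist_eq_norm]
    exact hanti (Nat.zero_le k)
  have hcompact : IsCompact (Metric.closedBall y ‖x 0 - y‖) :=
    isCompact_closedBall y _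
  obtain ⟨z, _, φ₀, hφ₀mono, hφ₀conv⟩ := hcompact.tendsto_subseq hball
  -- every infinitely-occurring operator fixes z
  have hfix : ∀ M ∈ ℳ, {k | Mseq k = M}.Infinite → M z = z := by
    haveI := Classical.decEq (E → E)
    refine main_induction ℳ hfin hpara Mseq hMseq x hiter y hy dinf hd z
      (hfin.toFinset.card) ∅ φ₀ (by simp) ?_ hφ₀mono.tendsto_atTop hφ₀conv
    simp
  refine ⟨z, ?_, hfix⟩
  -- eventually only infinitely-occurring operators are used
  have hBfin : {k : ℕ | ¬ {j | Mseq j = Mseq k}.Infinite}.Finite := by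
    have hsub : {k : ℕ | ¬ {j | Mseq j = Mseq k}.Infinite} ⊆
        ⋃ M ∈ {M ∈ ℳ | ¬ {j | Mseq j = M}.Infinite}, {k | Mseq k = M} := by
      intro k hk
      apply Set.mem_biUnion (show Mseq k ∈ {M ∈ ℳ | ¬ {j | Mseq j = M}.Infinite} from
        ⟨hMseq k, hk⟩)
      exact rfl
    refine Set.Finite.subset ?_ hsub
    apply Set.Finite.biUnion (hfin.subset (Set.sep_subset _ _))
    intro M hM
    exact Set.not_infinite.mp hM.2
  obtain ⟨K, hK⟩ := hBfin.bddAbove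
  have hKfix : ∀ k, K < k → Mseq k z = z := by
    intro k hk
    have hknot : k ∉ {k : ℕ | ¬ {j | Mseq j = Mseq k}.Infinite} := by
      intro hmem
      exact absurd (hK hmem) (not_le.mpr hk)
    rw [Set.mem_setOf_eq, not_not] at hknot
    exact hfix (Mseq k) (hMseq k) hknot
  -- convergence of the whole sequence
  rw [NormedAddCommGroup.tendsto_atTop]
  intro ε hε
  have hconv0 : Tendsto (fun j => ‖x (φ₀ j) - z‖) atTop (𝓝 0) := by
    have := (hφ₀conv.sub_const z).norm
    simpa using this
  have hev : ∀ᶠ j in atTop, K < φ₀ j ∧ ‖x (φ₀ j) - z‖ < ε :=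
    (hφ₀mono.tendsto_atTop.eventually_gt_atTop K).and
      (hconv0.eventually (gt_mem_nhds hε))
  obtain ⟨j, hjK, hjε⟩ := hev.exists
  refine ⟨φ₀ j, fun k hk => ?_⟩
  have : ‖x k - z‖ ≤ ‖x (φ₀ j) - z‖ := by
    refine norm_le_of_chain x z hk ?_
    intro m hm1 _
    have hmz : Mseq m z = z := hKfix m (lt_of_lt_of_le hjK hm1)
    rw [hiter m]
    exact para_norm_le (hpara _ (hMseq m)) hmz
  exact lt_of_le_of_lt this hjε
end
end

section
/- Let N ≥ 1 and let W be an N×N doubly stochastic real matrix with strictly positive diagonal entries whose support edge set {(i,j) | W_{ij} > 0} is strongly connected on Fin N. Then a vector x : Fin N → ℝ satisfies W.mulVec x = x if and only if x is constant, i.e., there exists c ∈ ℝ with x_i = c for all i. Equivalently, the fixed-point set of the linear map x ↦ W x is exactly the set of consensus (constant) vectors. -/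
open scoped BigOperators

noncomputable section

/-- Perron–Frobenius: for a doubly stochastic matrix with positive diagonal and
strongly connected support, the fixed vectors of `x ↦ W x` are exactly the
consensus (constant) vectors. -/
theorem fixed_vectors_eq_consensus
    (N : ℕ) (hN : 1 ≤ N)
    (W : Matrix (Fin N) (Fin N) ℝ) (hDS : DoublyStochastic W)
    (hdiag : ∀ i, 0 < W i i)
    (hconn : StronglyConnected {p : Fin N × Fin N | 0 < W p.1 p.2}) :
    ∀ x : Fin N → ℝ, W.mulVec x = x ↔ ∃ c : ℝ, ∀ i, x i = c := by
  intro x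
  constructor
  · intro hfix
    obtain ⟨i0, _, hmax⟩ :=
      Finset.exists_max_image Finset.univ x ⟨⟨0, hN⟩, Finset.mem_univ _⟩
    refine ⟨x i0, ?_⟩
    have hstep : ∀ c d, x c = x i0 → 0 < W c d → x d = x i0 := by
      intro c d hc hcd
      have h2 : ∑ j, W c j * x j = x c := congrFun hfix c
      have hrow := hDS.2.1 c
      have h1 : ∑ j, W c j * (x c - x j) = 0 := by
        have : ∑ j, W c j * (x c - x j)
            = (∑ j, W c j) * x c - ∑ j, W c j * x j := by
          rw [Finset.sum_mul, ← Finset.sum_sub_distrib]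
          exact Finset.sum_congr rfl fun j _ => by ring
        rw [this, hrow, h2]; ring
      have hnn : ∀ j ∈ Finset.univ, 0 ≤ W c j * (x c - x j) := by
        intro j _
        refine mul_nonneg (hDS.1 c j) ?_
        have := hmax j (Finset.mem_univ j)
        rw [hc]; linarith
      have hd := (Finset.sum_eq_zero_iff_of_nonneg hnn).mp h1 d (Finset.mem_univ d)
      rcases mul_eq_zero.mp hd with h | h
      · exact absurd h (ne_of_gt hcd)
      · linarith
    intro i
    have hreach := hconn i0 i
    have : ∀ b, Relation.ReflTransGen
        (fun a b => (a, b) ∈ {p : Fin N × Fin N | 0 < W p.1 p.2}) i0 b → x b = x i0 := by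
      intro b hb
      induction hb with
      | refl => rfl
      | tail hrt hedge ih => exact hstep _ _ ih hedge
    exact this i hreach
  · rintro ⟨c, hc⟩
    funext j
    have hrow := hDS.2.1 j
    simp only [Matrix.mulVec, dotProduct, hc]
    rw [← Finset.sum_mul, hrow, one_mul]
end
end

section
/- Let N ≥ 1 and Q ≥ 1, and let W₁, …, W_Q be N×N real matrices with all entries nonnegative and with strictly positive diagonal entries. Then for all indices i, j ∈ Fin N: if (W_l)_{ij} > 0 for some l ∈ {1, …, Q}, then the matrix product satisfies (W_Q ⬝ W_{Q−1} ⬝ ⋯ ⬝ W₁)_{ij} > 0. Consequently, if the union edge set ⋃_{l=1}^{Q} {(i,j) | (W_l)_{ij} > 0} is strongly connected on Fin N, then the edge set {(i,j) | (W_Q ⬝ ⋯ ⬝ W₁)_{ij} > 0} of the product is strongly connected. -/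
open scoped BigOperators

noncomputable section

private lemma mul_entry_nonneg {N : ℕ} (A B : Matrix (Fin N) (Fin N) ℝ)
    (hA : ∀ i j, 0 ≤ A i j) (hB : ∀ i j, 0 ≤ B i j) : ∀ i j, 0 ≤ (A * B) i j := by
  intro i j
  rw [Matrix.mul_apply]
  exact Finset.sum_nonneg fun k _ => mul_nonneg (hA i k) (hB k j)

private lemma mul_entry_pos {N : ℕ} (A B : Matrix (Fin N) (Fin N) ℝ)
    (hA : ∀ i j, 0 ≤ A i j) (hB : ∀ i j, 0 ≤ B i j) {i k j : Fin N}
    (hik : 0 < A i k) (hkj : 0 < B k j) : 0 < (A * B) i j := by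
  rw [Matrix.mul_apply]
  exact Finset.sum_pos' (fun m _ => mul_nonneg (hA i m) (hB m j))
    ⟨k, Finset.mem_univ k, mul_pos hik hkj⟩

private lemma prod_nonneg_posdiag {N : ℕ} (L : List (Matrix (Fin N) (Fin N) ℝ))
    (h : ∀ M ∈ L, (∀ i j, 0 ≤ M i j) ∧ ∀ i, 0 < M i i) :
    (∀ i j, 0 ≤ L.prod i j) ∧ ∀ i, 0 < L.prod i i := by
  induction L with
  | nil =>
    constructor
    · intro i j
      simp only [List.prod_nil, Matrix.one_apply]
      split <;> norm_num
    · intro i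
      simp [Matrix.one_apply]
  | cons M L ih =>
    have hM := h M List.mem_cons_self
    have ih' := ih fun M' hM' => h M' (List.mem_cons_of_mem M hM')
    rw [List.prod_cons]
    refine ⟨mul_entry_nonneg M L.prod hM.1 ih'.1, fun i =>
      mul_entry_pos M L.prod hM.1 ih'.1 (hM.2 i) (ih'.2 i)⟩

private lemma prod_entry_pos {N : ℕ} (L : List (Matrix (Fin N) (Fin N) ℝ))
    (h : ∀ M ∈ L, (∀ i j, 0 ≤ M i j) ∧ ∀ i, 0 < M i i)
    {M : Matrix (Fin N) (Fin N) ℝ} (hM : M ∈ L) {i j : Fin N}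
    (hij : 0 < M i j) : 0 < L.prod i j := by
  obtain ⟨s, t, rfl⟩ := List.append_of_mem hM
  have hs := prod_nonneg_posdiag s fun M' h' => h M' (by simp [h'])
  have ht := prod_nonneg_posdiag t fun M' h' => h M' (by simp [h'])
  have hMn := h M (by simp)
  rw [List.prod_append, List.prod_cons]
  exact mul_entry_pos _ _ hs.1
    (mul_entry_nonneg M t.prod hMn.1 ht.1) (hs.2 i)
    (mul_entry_pos M t.prod hMn.1 ht.1 hij (ht.2 j))

/-- For nonnegative matrices with strictly positive diagonals, positivity of an
entry of any factor propagates to the product `W_Q ⬝ ⋯ ⬝ W₁`; hence strong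
connectivity of the union of the supports implies strong connectivity of the
support of the product. -/
theorem product_support_strongly_connected
    (N Q : ℕ) (hN : 1 ≤ N) (hQ : 1 ≤ Q)
    (W : Fin Q → Matrix (Fin N) (Fin N) ℝ)
    (hnn : ∀ l i j, 0 ≤ W l i j) (hdiag : ∀ l i, 0 < W l i i) :
    (∀ i j : Fin N, (∃ l : Fin Q, 0 < W l i j) →
      0 < ((List.ofFn fun r : Fin Q => W (Fin.rev r)).prod) i j) ∧
    (StronglyConnected {p : Fin N × Fin N | ∃ l : Fin Q, 0 < W l p.1 p.2} →
      StronglyConnected {p : Fin N × Fin N |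
        0 < ((List.ofFn fun r : Fin Q => W (Fin.rev r)).prod) p.1 p.2}) := by
  have hall : ∀ M ∈ (List.ofFn fun r : Fin Q => W (Fin.rev r)),
      (∀ i j, 0 ≤ M i j) ∧ ∀ i, 0 < M i i := by
    intro M hM
    obtain ⟨r, rfl⟩ := List.mem_ofFn.mp hM
    exact ⟨hnn _, hdiag _⟩
  have h1 : ∀ i j : Fin N, (∃ l : Fin Q, 0 < W l i j) →
      0 < ((List.ofFn fun r : Fin Q => W (Fin.rev r)).prod) i j := by
    intro i j ⟨l, hl⟩
    refine prod_entry_pos _ hall (M := W l) ?_ hl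
    rw [List.mem_ofFn]
    exact ⟨l.rev, by simp⟩
  refine ⟨h1, fun hsc i j => ?_⟩
  exact Relation.ReflTransGen.mono (fun a b hab => h1 a b hab) i j (hsc i j)
end
end
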